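/- Let a < b be real numbers, N ≥ 1 a natural number, and let R_1, …, R_N be independent random variables each uniformly distributed on [a, b]. Then for every δ ∈ (0, 1), with probability at least 1 − δ², b ≤ ((N + 1)/N) · max_{1 ≤ n ≤ N} R_n + (b − a)(N + 1)/(N²·δ) − a/N. -/

import Mathlib

open MeasureTheory ProbabilityTheory

lemma exp_neg_inv_le_sq_aux {δ : ℝ} (h0 : 0 < δ) : Real.exp (-(1/δ)) ≤ δ^2 := by
  set u := 1/δ with hu
  have hupos : 0 < u := by positivity
  have h4 : 1 + u/4 ≤ Real.exp (u/4) := by linarith [Real.add_one_le_exp (u/4)]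
  have he : Real.exp u = (Real.exp (u/4))^4 := by
    rw [← Real.exp_nat_mul]; norm_num; ring_nf
  have ha : u ≤ (1+u/4)^2 := by nlinarith [sq_nonneg (1-u/4)]
  have hsq : u^2 ≤ Real.exp u := by
    rw [he]
    calc u^2 ≤ ((1+u/4)^2)^2 := pow_le_pow_left₀ hupos.le ha 2
    _ ≤ ((Real.exp (u/4))^2)^2 :=
        pow_le_pow_left₀ (by positivity) (pow_le_pow_left₀ (by positivity) h4 2) 2
    _ = (Real.exp (u/4))^4 := by ring
  have h5 : Real.exp (-u) ≤ (u^2)⁻¹ := by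
    rw [Real.exp_neg]
    exact inv_anti₀ (by positivity) hsq
  have h6 : (u^2)⁻¹ = δ^2 := by
    rw [hu, one_div, inv_pow, inv_inv]
  linarith

lemma pow_bound_aux {δ : ℝ} (h0 : 0 < δ) {N : ℕ} (hN : 1 ≤ N) {c : ℝ}
    (hc : c ≤ 1 - 1/(N*δ)) : (max c 0)^N ≤ δ^2 := by
  have hNpos : (0:ℝ) < N := by exact_mod_cast hN
  have hNδ : 0 < (N:ℝ)*δ := by positivity
  rcases le_or_gt c 0 with h | h
  · rw [max_eq_right h, zero_pow (by omega)]
    positivity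
  · rw [max_eq_left h.le]
    have h2 : c ≤ Real.exp (-(1/((N:ℝ)*δ))) := by
      have := Real.add_one_le_exp (-(1/((N:ℝ)*δ)))
      linarith
    calc c^N ≤ (Real.exp (-(1/((N:ℝ)*δ))))^N := pow_le_pow_left₀ h.le h2 N
    _ = Real.exp ((N:ℝ) * (-(1/((N:ℝ)*δ)))) := (Real.exp_nat_mul _ N).symm
    _ = Real.exp (-(1/δ)) := by
        congr 1
        field_simp
    _ ≤ δ^2 := exp_neg_inv_le_sq_aux h0

theorem upper_bound_sup_risk_iid_uniform
    {Ω : Type*} [MeasurableSpace Ω] (P : Measure Ω) [IsProbabilityMeasure P]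
    (a b : ℝ) (hab : a < b) (N : ℕ) (hN : 1 ≤ N)
    (R : Fin N → Ω → ℝ) (hmeas : ∀ n, Measurable (R n))
    (hunif : ∀ n, Measure.map (R n) P
      = (ENNReal.ofReal (b - a))⁻¹ • volume.restrict (Set.Icc a b))
    (hindep : iIndepFun R P)
    (δ : ℝ) (hδ : δ ∈ Set.Ioo (0 : ℝ) 1) :
    1 - δ ^ 2 ≤
      (P {ω | b ≤ ((N + 1) / N) * (⨆ n, R n ω)
        + (b - a) * (N + 1) / (N ^ 2 * δ) - a / N}).toReal := by
  obtain ⟨hδ0, hδ1⟩ := hδ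
  have hNpos : (0:ℝ) < N := by exact_mod_cast hN
  have hN0 : (N:ℝ) ≠ 0 := ne_of_gt hNpos
  have hN1 : (0:ℝ) < (N:ℝ) + 1 := by linarith
  have hba : (0:ℝ) < b - a := sub_pos.mpr hab
  have : Nonempty (Fin N) := ⟨⟨0, hN⟩⟩
  set t : ℝ := ((N:ℝ)*b + a)/((N:ℝ)+1) - (b-a)/((N:ℝ)*δ) with ht
  have hk : 0 < ((N:ℝ)+1)/N := div_pos hN1 hNpos
  have hkey : ∀ M : ℝ, (b ≤ (((N:ℝ) + 1) / N) * M
        + (b - a) * ((N:ℝ) + 1) / ((N:ℝ) ^ 2 * δ) - a / N) ↔ t ≤ M := by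
    intro M
    have e1 : (((N:ℝ)+1)/N) * M + (b-a)*((N:ℝ)+1)/((N:ℝ)^2*δ) - a/N - b
        = (((N:ℝ)+1)/N) * (M - t) := by
      rw [ht]; field_simp; ring
    constructor <;> intro h
    · have h2 : 0 ≤ (((N:ℝ)+1)/N) * (M - t) := by linarith [e1]
      have h3 : 0 ≤ M - t := (mul_nonneg_iff_of_pos_left hk).mp h2
      linarith
    · have h3 : 0 ≤ (((N:ℝ)+1)/N) * (M - t) := mul_nonneg hk.le (by linarith)
      linarith [e1]
  -- rewrite the event
  have hsetE : {ω | b ≤ (((N:ℝ) + 1) / N) * (⨆ n, R n ω)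
        + (b - a) * ((N:ℝ) + 1) / ((N:ℝ) ^ 2 * δ) - a / N}
      = {ω | t ≤ ⨆ n, R n ω} := Set.ext fun ω => hkey _
  set E : Set Ω := {ω | t ≤ ⨆ n, R n ω} with hE
  have hMeasSup : Measurable (fun ω => ⨆ n, R n ω) := Measurable.iSup hmeas
  have hEmeas : MeasurableSet E := measurableSet_le measurable_const hMeasSup
  have hcompl : Eᶜ = ⋂ n, R n ⁻¹' Set.Iio t := by
    ext ω
    simp only [hE, Set.mem_compl_iff, Set.mem_setOf_eq, not_le, Set.mem_iInter,
      Set.mem_preimage, Set.mem_Iio]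
    constructor
    · intro h n
      exact lt_of_le_of_lt (le_ciSup (f := fun n => R n ω)
          (Set.Finite.bddAbove (Set.finite_range _)) n) h
    · intro h
      obtain ⟨n, hn⟩ := Finite.exists_max (fun n => R n ω)
      exact lt_of_le_of_lt (ciSup_le hn) (h n)
  have hprod : P (⋂ n, R n ⁻¹' Set.Iio t) = ∏ n, P (R n ⁻¹' Set.Iio t) := by
    have := (iIndepFun_iff_measure_inter_preimage_eq_mul.mp hindep) Finset.univ
      (sets := fun _ => Set.Iio t) (fun i _ => measurableSet_Iio)
    simpa using this
  set c : ℝ := (t - a)/(b - a) with hc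
  have hfac : ∀ n, P (R n ⁻¹' Set.Iio t) ≤ ENNReal.ofReal c := by
    intro n
    have h1 : P (R n ⁻¹' Set.Iio t) = Measure.map (R n) P (Set.Iio t) :=
      (Measure.map_apply (hmeas n) measurableSet_Iio).symm
    rw [h1, hunif n, Measure.smul_apply, smul_eq_mul,
      Measure.restrict_apply measurableSet_Iio]
    have hsub : Set.Iio t ∩ Set.Icc a b ⊆ Set.Ico a t :=
      fun x ⟨hx1, hx2⟩ => ⟨hx2.1, hx1⟩
    calc (ENNReal.ofReal (b-a))⁻¹ * volume (Set.Iio t ∩ Set.Icc a b)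
        ≤ (ENNReal.ofReal (b-a))⁻¹ * volume (Set.Ico a t) :=
          mul_le_mul_right (measure_mono hsub) _
      _ = (ENNReal.ofReal (b-a))⁻¹ * ENNReal.ofReal (t-a) := by rw [Real.volume_Ico]
      _ = ENNReal.ofReal c := by
          rw [hc, ENNReal.ofReal_div_of_pos hba, div_eq_mul_inv, mul_comm]
  have hc1 : c ≤ 1 - 1/((N:ℝ)*δ) := by
    have hceq : c = (N:ℝ)/((N:ℝ)+1) - 1/((N:ℝ)*δ) := by
      rw [hc, ht]; field_simp; ring
    have h2 : (N:ℝ)/((N:ℝ)+1) ≤ 1 := (div_le_one hN1).mpr (by linarith)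
    linarith
  have hEc : P Eᶜ ≤ ENNReal.ofReal (δ^2) := by
    calc P Eᶜ = ∏ n, P (R n ⁻¹' Set.Iio t) := by rw [hcompl, hprod]
    _ ≤ ∏ _n : Fin N, ENNReal.ofReal c := Finset.prod_le_prod' fun n _ => hfac n
    _ = (ENNReal.ofReal c) ^ N := by
        rw [Finset.prod_const, Finset.card_univ, Fintype.card_fin]
    _ ≤ (ENNReal.ofReal (max c 0)) ^ N :=
        pow_le_pow_left' (ENNReal.ofReal_le_ofReal (le_max_left _ _)) N
    _ = ENNReal.ofReal ((max c 0) ^ N) :=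
        (ENNReal.ofReal_pow (le_max_right _ _) N).symm
    _ ≤ ENNReal.ofReal (δ^2) :=
        ENNReal.ofReal_le_ofReal (pow_bound_aux hδ0 hN hc1)
  have hPE : P E = 1 - P Eᶜ := by
    have h8 := prob_compl_eq_one_sub (μ := P) hEmeas.compl
    rwa [compl_compl] at h8
  have hle1 : P Eᶜ ≤ 1 := prob_le_one
  have htoReal : (P Eᶜ).toReal ≤ δ^2 := by
    have h7 := ENNReal.toReal_mono ENNReal.ofReal_ne_top hEc
    rwa [ENNReal.toReal_ofReal (by positivity)] at h7
  rw [hsetE, hPE, ENNReal.toReal_sub_of_le hle1 ENNReal.one_ne_top, ENNReal.toReal_one]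
  linarith
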